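/- Let g: ℕ → ℂ be an additive function that is either completely additive or strongly additive, and suppose B_g(X) → ∞ as X → ∞. Then the contribution of higher prime powers is negligible: ∑_{p^k ≤ X, k ≥ 2} |g(p^k)|² p^{-k} = o(B_g(X)²) as X → ∞. -/

import Mathlib

set_option maxHeartbeats 2000000


open Finset

/-- The set of prime powers `p^k ≤ Y` (as natural numbers `≥ 2`). -/
noncomputable def ppows (Y : ℝ) : Finset ℕ :=
  (Finset.Icc 2 ⌊Y⌋₊).filter IsPrimePow

/-- `A_g(Y) = ∑_{p^k ≤ Y} g(p^k) p^{-k} (1 - 1/p)`. -/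
noncomputable def Ag (g : ℕ → ℂ) (Y : ℝ) : ℂ :=
  ∑ q ∈ ppows Y, g q * (1 / (q : ℂ)) * (1 - 1 / ((q.minFac : ℂ)))

/-- `B_g(Y) = (∑_{p^k ≤ Y} |g(p^k)|² p^{-k})^{1/2}`. -/
noncomputable def Bg (g : ℕ → ℂ) (Y : ℝ) : ℝ :=
  Real.sqrt (∑ q ∈ ppows Y, ‖g q‖ ^ 2 / (q : ℝ))

/-- `g` is additive: `g(mn) = g(m) + g(n)` whenever `gcd(m,n) = 1`. -/
def IsAdditive (g : ℕ → ℂ) : Prop :=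
  ∀ m n : ℕ, Nat.Coprime m n → g (m * n) = g m + g n


/-- `g` is completely additive: `g(mn) = g(m) + g(n)` for all positive `m, n`. -/
def IsCompletelyAdditive (g : ℕ → ℂ) : Prop :=
  ∀ m n : ℕ, 0 < m → 0 < n → g (m * n) = g m + g n

/-- `g` is strongly additive: additive with `g(p^k) = g(p)` for all primes `p`, `k ≥ 1`. -/
def IsStronglyAdditive (g : ℕ → ℂ) : Prop :=
  IsAdditive g ∧ ∀ p k : ℕ, p.Prime → 1 ≤ k → g (p ^ k) = g p

lemma quad_le_geom (j : ℕ) : ((j : ℝ) + 5) ^ 2 ≤ 25 * (3/2 : ℝ) ^ j := by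
  induction j with
  | zero => norm_num
  | succ n ih =>
    have h : (3/2:ℝ) ^ (n+1) = (3/2) * (3/2) ^ n := by ring
    push_cast
    nlinarith [ih, Nat.cast_nonneg (α := ℝ) n]

lemma geo_sum (n : ℕ) : ∑ i ∈ Finset.range n, (3/4 : ℝ) ^ i ≤ 4 := by
  rw [geom_sum_eq (by norm_num : (3/4:ℝ) ≠ 1)]
  rw [div_le_iff_of_neg (by norm_num : (3/4:ℝ) - 1 < 0)]
  have : (0:ℝ) ≤ (3/4:ℝ)^n := by positivity
  nlinarith

lemma gnorm_pow_le (g : ℕ → ℂ) (hcs : IsCompletelyAdditive g ∨ IsStronglyAdditive g)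
    (p k : ℕ) (hp : p.Prime) (hk : 1 ≤ k) : ‖g (p ^ k)‖ ≤ k * ‖g p‖ := by
  rcases hcs with h | h
  · have h1 : g 1 = 0 := by
      have := h 1 1 one_pos one_pos
      simpa using this
    have key : ∀ m : ℕ, g (p ^ m) = m * g p := by
      intro m
      induction m with
      | zero => simpa using h1
      | succ n ihn =>
        rw [pow_succ, h (p ^ n) p (pow_pos hp.pos n) hp.pos, ihn]
        push_cast; ring
    rw [key k, norm_mul, Complex.norm_natCast]
  · rw [h.2 p k hp hk]
    have : (1:ℝ) ≤ (k:ℝ) := by exact_mod_cast hk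
    nlinarith [norm_nonneg (g p)]

lemma T_facts {X : ℝ} {q : ℕ}
    (hq : q ∈ (ppows X).filter (fun q => ¬ q.Prime)) :
    (q.minFac).Prime ∧ 2 ≤ q.factorization q.minFac ∧
      q = q.minFac ^ (q.factorization q.minFac) ∧ q ≤ ⌊X⌋₊ := by
  rw [mem_filter, ppows, mem_filter, mem_Icc] at hq
  obtain ⟨⟨⟨h2, hN⟩, hpp⟩, hnp⟩ := hq
  have hp : (q.minFac).Prime := Nat.minFac_prime (by omega)
  have hkey := hpp.minFac_pow_factorization_eq
  refine ⟨hp, ?_, hkey.symm, hN⟩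
  by_contra hlt
  have hk01 : q.factorization q.minFac = 0 ∨ q.factorization q.minFac = 1 := by omega
  rcases hk01 with h | h <;> rw [h] at hkey
  · simp at hkey; omega
  · rw [pow_one] at hkey
    exact hnp (hkey ▸ hp)

lemma term_bound (g : ℕ → ℂ) (hcs : IsCompletelyAdditive g ∨ IsStronglyAdditive g)
    {X : ℝ} {q : ℕ} (hq : q ∈ (ppows X).filter (fun q => ¬ q.Prime)) :
    ‖g q‖ ^ 2 / (q : ℝ) ≤
      25 * ‖g q.minFac‖ ^ 2 * (3/4 : ℝ) ^ (q.factorization q.minFac - 2) / (q.minFac : ℝ) ^ 2 := by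
  obtain ⟨hp, hk2, hqe, -⟩ := T_facts hq
  set p := q.minFac with hpdef
  set k := q.factorization q.minFac with hkdef
  set j := k - 2 with hjdef
  have hjk : j + 2 = k := by omega
  have hnorm : ‖g q‖ ≤ (k : ℝ) * ‖g p‖ := by
    rw [hqe]; exact gnorm_pow_le g hcs p k hp (by omega)
  have hsq : ‖g q‖ ^ 2 ≤ (k : ℝ) ^ 2 * ‖g p‖ ^ 2 := by
    have := pow_le_pow_left₀ (norm_nonneg _) hnorm 2
    calc ‖g q‖ ^ 2 ≤ ((k:ℝ) * ‖g p‖) ^ 2 := this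
    _ = (k:ℝ)^2 * ‖g p‖^2 := by ring
  have hkR : (k : ℝ) ^ 2 ≤ 25 * (3/2 : ℝ) ^ j := by
    have h1 := quad_le_geom j
    have h2 : (k : ℝ) ≤ (j : ℝ) + 5 := by
      have : ((j : ℕ) : ℝ) + 2 = (k : ℝ) := by exact_mod_cast congrArg (Nat.cast (R := ℝ)) hjk
      linarith
    have h3 : (k:ℝ)^2 ≤ ((j:ℝ)+5)^2 := by
      apply pow_le_pow_left₀ (Nat.cast_nonneg k) h2
    linarith
  have hnum : ‖g q‖ ^ 2 ≤ 25 * (3/2 : ℝ) ^ j * ‖g p‖ ^ 2 := by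
    nlinarith [sq_nonneg (‖g p‖), Nat.cast_nonneg (α := ℝ) k]
  have hp2 : (2 : ℝ) ≤ (p : ℝ) := by exact_mod_cast hp.two_le
  have hdenom : (p : ℝ) ^ 2 * 2 ^ j ≤ (q : ℝ) := by
    have hqr : (q : ℝ) = (p : ℝ) ^ k := by rw [hqe]; push_cast; ring
    rw [hqr, ← hjk, pow_add]
    have : (2:ℝ) ^ j ≤ (p:ℝ) ^ j := pow_le_pow_left₀ (by norm_num) hp2 j
    have hpj : (0:ℝ) ≤ (p:ℝ)^2 := by positivity
    calc (p:ℝ)^2 * 2^j ≤ (p:ℝ)^2 * (p:ℝ)^j := by nlinarith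
    _ = (p:ℝ)^j * (p:ℝ)^2 := by ring
  have hdpos : (0 : ℝ) < (p : ℝ) ^ 2 * 2 ^ j := by positivity
  have hmain : ‖g q‖ ^ 2 / (q : ℝ) ≤ (25 * (3/2 : ℝ) ^ j * ‖g p‖ ^ 2) / ((p : ℝ) ^ 2 * 2 ^ j) :=
    div_le_div₀ (by positivity) hnum hdpos hdenom
  have heq : (25 * (3/2 : ℝ) ^ j * ‖g p‖ ^ 2) / ((p : ℝ) ^ 2 * 2 ^ j)
      = 25 * ‖g p‖ ^ 2 * (3/4 : ℝ) ^ j / (p : ℝ) ^ 2 := by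
    have h34 : (3/4 : ℝ) ^ j = (3/2 : ℝ) ^ j / 2 ^ j := by
      rw [← div_pow]; norm_num
    rw [h34]
    have h2j : (2 : ℝ) ^ j ≠ 0 := by positivity
    field_simp
  rw [heq] at hmain
  exact hmain

lemma main_bound (g : ℕ → ℂ) (hcs : IsCompletelyAdditive g ∨ IsStronglyAdditive g)
    (P : ℕ) (hP : 1 ≤ P) (X : ℝ) :
    ∑ q ∈ (ppows X).filter (fun q => ¬ q.Prime), ‖g q‖ ^ 2 / (q : ℝ)
      ≤ (∑ p ∈ (Finset.Icc 2 P).filter Nat.Prime, 200 * ‖g p‖ ^ 2)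
        + (200 / (P : ℝ)) * (Bg g X) ^ 2 := by
  classical
  set N := ⌊X⌋₊ with hN
  set T := (ppows X).filter (fun q => ¬ q.Prime) with hT
  set F : ℕ × ℕ → ℝ := fun x => 25 * ‖g x.1‖ ^ 2 * (3/4 : ℝ) ^ (x.2 - 2) / (x.1 : ℝ) ^ 2 with hF
  set e : ℕ → ℕ × ℕ := fun q => (q.minFac, q.factorization q.minFac) with he
  have hFnn : ∀ x, 0 ≤ F x := fun x => by rw [hF]; positivity
  have step1 : ∑ q ∈ T, ‖g q‖ ^ 2 / (q : ℝ) ≤ ∑ q ∈ T, F (e q) :=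
    Finset.sum_le_sum (fun q hq => term_bound g hcs hq)
  have hinj : ∀ a ∈ T, ∀ b ∈ T, e a = e b → a = b := by
    intro a ha b hb hab
    have h1 := (T_facts ha).2.2.1
    have h2 := (T_facts hb).2.2.1
    rw [he] at hab
    simp only [Prod.mk.injEq] at hab
    obtain ⟨h3, h4⟩ := hab
    rw [h1, h2, h4, h3]
  have step2 : ∑ q ∈ T, F (e q) = ∑ x ∈ T.image e, F x := (Finset.sum_image hinj).symm
  have hsub : T.image e ⊆ ((Icc 2 N).filter Nat.Prime) ×ˢ (Icc 2 N) := by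
    intro x hx
    rw [Finset.mem_image] at hx
    obtain ⟨q, hq, rfl⟩ := hx
    obtain ⟨hp, hk2, hqe, hqN⟩ := T_facts hq
    have hqpos : 0 < q := by
      rw [hqe]; exact pow_pos hp.pos _
    simp only [he]
    rw [Finset.mem_product, mem_filter, mem_Icc, mem_Icc]
    refine ⟨⟨⟨hp.two_le, le_trans (Nat.minFac_le hqpos) hqN⟩, hp⟩, hk2, ?_⟩
    have h1 : q.factorization q.minFac < 2 ^ (q.factorization q.minFac) :=
      Nat.lt_two_pow_self
    have h2 : 2 ^ (q.factorization q.minFac) ≤ q.minFac ^ (q.factorization q.minFac) :=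
      Nat.pow_le_pow_left hp.two_le _
    omega
  have step3 : ∑ x ∈ T.image e, F x ≤ ∑ x ∈ ((Icc 2 N).filter Nat.Prime) ×ˢ (Icc 2 N), F x :=
    Finset.sum_le_sum_of_subset_of_nonneg hsub (fun x _ _ => hFnn x)
  have step4 : ∑ x ∈ ((Icc 2 N).filter Nat.Prime) ×ˢ (Icc 2 N), F x
      ≤ ∑ p ∈ (Icc 2 N).filter Nat.Prime, 200 * ‖g p‖ ^ 2 / (p : ℝ) ^ 2 := by
    rw [Finset.sum_product]
    apply Finset.sum_le_sum
    intro p hp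
    have hgeo : ∑ k ∈ Icc 2 N, (3/4 : ℝ) ^ (k - 2) ≤ 8 := by
      have h1 : ∀ k ∈ Icc 2 N, (3/4 : ℝ) ^ (k - 2) = (16/9) * (3/4 : ℝ) ^ k := by
        intro k hk
        rw [mem_Icc] at hk
        have hk2 : k - 2 + 2 = k := by omega
        calc (3/4 : ℝ) ^ (k - 2) = 16/9 * ((3/4:ℝ) ^ (k-2) * (3/4:ℝ) ^ 2) := by ring
        _ = 16/9 * (3/4:ℝ) ^ (k - 2 + 2) := by rw [pow_add]
        _ = 16/9 * (3/4:ℝ) ^ k := by rw [hk2]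
      rw [Finset.sum_congr rfl h1, ← Finset.mul_sum]
      have h2 : ∑ k ∈ Icc 2 N, (3/4 : ℝ) ^ k ≤ ∑ k ∈ range (N + 1), (3/4 : ℝ) ^ k := by
        apply Finset.sum_le_sum_of_subset_of_nonneg
        · intro k hk; rw [mem_Icc] at hk; rw [mem_range]; omega
        · intro k _ _; positivity
      have h3 := geo_sum (N + 1)
      have h4 : (0:ℝ) ≤ ∑ k ∈ Icc 2 N, (3/4 : ℝ) ^ k :=
        Finset.sum_nonneg (fun k _ => by positivity)
      nlinarith
    have hcongr : ∑ k ∈ Icc 2 N, F (p, k)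
        = (25 * ‖g p‖ ^ 2 / (p : ℝ) ^ 2) * ∑ k ∈ Icc 2 N, (3/4 : ℝ) ^ (k - 2) := by
      rw [Finset.mul_sum]
      apply Finset.sum_congr rfl
      intro k _
      rw [hF]
      ring
    rw [hcongr]
    have hnn : (0:ℝ) ≤ 25 * ‖g p‖ ^ 2 / (p : ℝ) ^ 2 := by positivity
    calc (25 * ‖g p‖ ^ 2 / (p : ℝ) ^ 2) * ∑ k ∈ Icc 2 N, (3/4 : ℝ) ^ (k - 2)
        ≤ (25 * ‖g p‖ ^ 2 / (p : ℝ) ^ 2) * 8 := mul_le_mul_of_nonneg_left hgeo hnn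
    _ = 200 * ‖g p‖ ^ 2 / (p : ℝ) ^ 2 := by ring
  have step5 : ∑ p ∈ (Icc 2 N).filter Nat.Prime, 200 * ‖g p‖ ^ 2 / (p : ℝ) ^ 2
      ≤ (∑ p ∈ (Finset.Icc 2 P).filter Nat.Prime, 200 * ‖g p‖ ^ 2)
        + (200 / (P : ℝ)) * (Bg g X) ^ 2 := by
    set A := (Icc 2 N).filter Nat.Prime with hA
    rw [← Finset.sum_filter_add_sum_filter_not A (fun p => p ≤ P)]
    apply add_le_add
    · -- small primes
      calc ∑ p ∈ A.filter (fun p => p ≤ P), 200 * ‖g p‖ ^ 2 / (p : ℝ) ^ 2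
          ≤ ∑ p ∈ A.filter (fun p => p ≤ P), 200 * ‖g p‖ ^ 2 := by
            apply Finset.sum_le_sum
            intro p hp
            rw [mem_filter, hA, mem_filter, mem_Icc] at hp
            have : (1:ℝ) ≤ (p:ℝ)^2 := by
              have : (2:ℝ) ≤ (p:ℝ) := by exact_mod_cast hp.1.1.1
              nlinarith
            exact div_le_self (by positivity) this
      _ ≤ ∑ p ∈ (Finset.Icc 2 P).filter Nat.Prime, 200 * ‖g p‖ ^ 2 := by
            apply Finset.sum_le_sum_of_subset_of_nonneg
            · intro p hp
              rw [mem_filter, hA, mem_filter, mem_Icc] at hp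
              rw [mem_filter, mem_Icc]
              exact ⟨⟨hp.1.1.1, hp.2⟩, hp.1.2⟩
            · intro p _ _; positivity
    · -- large primes
      have hterm : ∀ p ∈ A.filter (fun p => ¬ p ≤ P),
          200 * ‖g p‖ ^ 2 / (p : ℝ) ^ 2 ≤ (200 / (P : ℝ)) * (‖g p‖ ^ 2 / (p : ℝ)) := by
        intro p hp
        rw [mem_filter, hA, mem_filter, mem_Icc] at hp
        have hPp : (P : ℝ) ≤ (p : ℝ) := by exact_mod_cast le_of_lt (by omega : P < p)
        have hppos : (0:ℝ) < (p:ℝ) := by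
          have := hp.1.1.1; positivity
        have hPpos : (0:ℝ) < (P:ℝ) := by exact_mod_cast hP
        rw [div_mul_div_comm]
        have h1 : (p:ℝ)^2 = (p:ℝ) * (p:ℝ) := sq (p:ℝ) ▸ by ring
        rw [h1]
        apply div_le_div_of_nonneg_left (by positivity) (by positivity)
        nlinarith
      calc ∑ p ∈ A.filter (fun p => ¬ p ≤ P), 200 * ‖g p‖ ^ 2 / (p : ℝ) ^ 2
          ≤ ∑ p ∈ A.filter (fun p => ¬ p ≤ P), (200 / (P : ℝ)) * (‖g p‖ ^ 2 / (p : ℝ)) :=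
            Finset.sum_le_sum hterm
      _ = (200 / (P : ℝ)) * ∑ p ∈ A.filter (fun p => ¬ p ≤ P), ‖g p‖ ^ 2 / (p : ℝ) := by
            rw [Finset.mul_sum]
      _ ≤ (200 / (P : ℝ)) * (Bg g X) ^ 2 := by
            apply mul_le_mul_of_nonneg_left _ (by positivity)
            have hBsq : (Bg g X) ^ 2 = ∑ q ∈ ppows X, ‖g q‖ ^ 2 / (q : ℝ) := by
              rw [Bg]
              exact Real.sq_sqrt (Finset.sum_nonneg (fun q _ => by positivity))
            rw [hBsq]
            apply Finset.sum_le_sum_of_subset_of_nonneg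
            · intro p hp
              rw [mem_filter, hA, mem_filter] at hp
              rw [ppows, mem_filter]
              exact ⟨hp.1.1, hp.1.2.isPrimePow⟩
            · intro q _ _; positivity
  calc ∑ q ∈ T, ‖g q‖ ^ 2 / (q : ℝ) ≤ ∑ q ∈ T, F (e q) := step1
  _ = ∑ x ∈ T.image e, F x := step2
  _ ≤ ∑ x ∈ ((Icc 2 N).filter Nat.Prime) ×ˢ (Icc 2 N), F x := step3
  _ ≤ ∑ p ∈ (Icc 2 N).filter Nat.Prime, 200 * ‖g p‖ ^ 2 / (p : ℝ) ^ 2 := step4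
  _ ≤ _ := step5

/-- If `g` is completely or strongly additive and `B_g(X) → ∞`, then
`∑_{p^k ≤ X, k ≥ 2} |g(p^k)|² p^{-k} = o(B_g(X)²)` as `X → ∞`. -/
theorem stmt3 (g : ℕ → ℂ) (hg : IsAdditive g)
    (hcs : IsCompletelyAdditive g ∨ IsStronglyAdditive g)
    (hB : Filter.Tendsto (Bg g) Filter.atTop Filter.atTop) :
    ∀ ε : ℝ, 0 < ε → ∃ X₀ : ℝ, ∀ X : ℝ, X₀ ≤ X →
      ∑ q ∈ (ppows X).filter (fun q => ¬ q.Prime), ‖g q‖ ^ 2 / (q : ℝ)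
        ≤ ε * (Bg g X) ^ 2 := by
  intro ε hε
  set P : ℕ := max 1 ⌈(400:ℝ)/ε⌉₊ with hPdef
  have hP1 : 1 ≤ P := le_max_left _ _
  have hPpos : (0:ℝ) < (P:ℝ) := by exact_mod_cast hP1
  have hPge : (400:ℝ)/ε ≤ (P:ℝ) := by
    have h1 := Nat.le_ceil ((400:ℝ)/ε)
    have h2 : ((⌈(400:ℝ)/ε⌉₊ : ℕ) : ℝ) ≤ (P:ℝ) := by
      exact_mod_cast le_max_right 1 ⌈(400:ℝ)/ε⌉₊
    linarith
  have hhalf : 200/(P:ℝ) ≤ ε/2 := by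
    rw [div_le_iff₀ hPpos]
    have h400 : 400 ≤ ε * (P:ℝ) := (div_le_iff₀' hε).mp hPge
    linarith
  have hCnn : (0:ℝ) ≤ ∑ p ∈ (Finset.Icc 2 P).filter Nat.Prime, 200 * ‖g p‖ ^ 2 :=
    Finset.sum_nonneg fun p _ => by positivity
  set C : ℝ := ∑ p ∈ (Finset.Icc 2 P).filter Nat.Prime, 200 * ‖g p‖ ^ 2 with hC
  obtain ⟨X₀, hX₀⟩ := Filter.eventually_atTop.mp
    (Filter.tendsto_atTop.mp hB (Real.sqrt (2*C/ε)))
  refine ⟨X₀, fun X hX => ?_⟩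
  have hBX := hX₀ X hX
  have hB2 : 2*C/ε ≤ (Bg g X)^2 := by
    have h1 : Real.sqrt (2*C/ε) ^ 2 ≤ (Bg g X)^2 :=
      pow_le_pow_left₀ (Real.sqrt_nonneg _) hBX 2
    rwa [Real.sq_sqrt (div_nonneg (mul_nonneg (by norm_num) hCnn) hε.le)] at h1
  have hmb := main_bound g hcs P hP1 X
  have hB2nn : (0:ℝ) ≤ (Bg g X)^2 := sq_nonneg _
  have h2C : 2*C ≤ (Bg g X)^2 * ε := (div_le_iff₀ hε).mp hB2
  calc ∑ q ∈ (ppows X).filter (fun q => ¬ q.Prime), ‖g q‖ ^ 2 / (q : ℝ)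
      ≤ C + (200/(P:ℝ)) * (Bg g X)^2 := hmb
  _ ≤ (ε/2) * (Bg g X)^2 + (ε/2) * (Bg g X)^2 := by
      apply add_le_add
      · linarith
      · exact mul_le_mul_of_nonneg_right hhalf hB2nn
  _ = ε * (Bg g X)^2 := by ring
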